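/- Let k̃ > 0 be a constant, I ⊆ ℝ an open interval, and χ : I → ℝ a function with χ(π) ≠ π and π + 1 ≠ 0 for all π ∈ I. Let e, f : I → (0,∞) be differentiable with e'(π) = ψ(π)e(π) and f'(π) = φ(π)f(π), where ψ(π) := π/((χ(π)−π)(π+1)) and φ(π) := 1/(χ(π)−π). On U := {(ρ,p) ∈ ℝ² : ρ > 0 and p/ρ ∈ I}, setting π := p/ρ, define n := ρ/e(π), s := k̃·ln(f(π)/ρ), Θ := π·e(π)/k̃ and ε := e(π) − 1. Then on U: (i) p = k̃·n·Θ (the generic ideal gas equation of state); (ii) ρ = n(1+ε); (iii) ∂ρn + χ(π)·∂pn = n/(ρ+p); (iv) ∂ρs + χ(π)·∂ps = 0; (v) Θ·∂ρs = ∂ρε + p·∂ρ(1/n) and Θ·∂ps = ∂pε + p·∂p(1/n). -/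

import Mathlib

noncomputable section

/-- Partial derivative with respect to the first coordinate (the energy density ρ). -/
def pd1 (f : ℝ × ℝ → ℝ) (x y : ℝ) : ℝ := deriv (fun t => f (t, y)) x

/-- Partial derivative with respect to the second coordinate (the pressure p). -/
def pd2 (f : ℝ × ℝ → ℝ) (x y : ℝ) : ℝ := deriv (fun t => f (x, t)) y

set_option maxHeartbeats 1000000

/-- The ideal thermodynamic scheme: if `e` and `f` solve `e' = ψe`, `f' = φf` with
`ψ(π) = π/((χ(π)−π)(π+1))` and `φ(π) = 1/(χ(π)−π)`, then `n = ρ/e(π)`,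
`s = k̃ ln(f(π)/ρ)`, `Θ = πe(π)/k̃`, `ε = e(π)−1` satisfy the generic ideal gas equation
of state `p = k̃nΘ`, the decomposition `ρ = n(1+ε)`, the matter and entropy conservation
equations, and the Gibbs relation, on `U = {(ρ,p) : ρ > 0, p/ρ ∈ I}`. -/
theorem generic_ideal_gas_scheme
    (ktilde : ℝ) (hk : 0 < ktilde)
    (I : Set ℝ) (hIopen : IsOpen I) (hIconn : I.OrdConnected)
    (χ e f : ℝ → ℝ)
    (hχ : ∀ π ∈ I, χ π ≠ π ∧ π + 1 ≠ 0)
    (he : ∀ π ∈ I, 0 < e π ∧ DifferentiableAt ℝ e π ∧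
      deriv e π = (π / ((χ π - π) * (π + 1))) * e π)
    (hf : ∀ π ∈ I, 0 < f π ∧ DifferentiableAt ℝ f π ∧
      deriv f π = (1 / (χ π - π)) * f π) :
    ∀ x y : ℝ, 0 < x → y / x ∈ I →
      (y = ktilde * (x / e (y / x)) * (y / x * e (y / x) / ktilde))
      ∧ (x = x / e (y / x) * (1 + (e (y / x) - 1)))
      ∧ (pd1 (fun q => q.1 / e (q.2 / q.1)) x y
            + χ (y / x) * pd2 (fun q => q.1 / e (q.2 / q.1)) x y
          = (x / e (y / x)) / (x + y))
      ∧ (pd1 (fun q => ktilde * Real.log (f (q.2 / q.1) / q.1)) x y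
            + χ (y / x) * pd2 (fun q => ktilde * Real.log (f (q.2 / q.1) / q.1)) x y = 0)
      ∧ (y / x * e (y / x) / ktilde
            * pd1 (fun q => ktilde * Real.log (f (q.2 / q.1) / q.1)) x y
          = pd1 (fun q => e (q.2 / q.1) - 1) x y
            + y * pd1 (fun q => 1 / (q.1 / e (q.2 / q.1))) x y)
      ∧ (y / x * e (y / x) / ktilde
            * pd2 (fun q => ktilde * Real.log (f (q.2 / q.1) / q.1)) x y
          = pd2 (fun q => e (q.2 / q.1) - 1) x y
            + y * pd2 (fun q => 1 / (q.1 / e (q.2 / q.1))) x y) := by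

  intro x y hx hI
  obtain ⟨hχne, hπ1⟩ := hχ _ hI
  obtain ⟨hepos, hediff, hederiv⟩ := he _ hI
  obtain ⟨hfpos, hfdiff, hfderiv⟩ := hf _ hI
  have hxne : x ≠ 0 := hx.ne'
  have hene : e (y / x) ≠ 0 := hepos.ne'
  have hfne : f (y / x) ≠ 0 := hfpos.ne'
  have hsub : χ (y / x) - y / x ≠ 0 := sub_ne_zero.mpr hχne
  have hkne : ktilde ≠ 0 := hk.ne'
  have hxy : x + y ≠ 0 := by
    intro h
    apply hπ1
    have hy : y = -x := by linarith
    rw [hy]; field_simp; norm_num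
  have hnne : x / e (y / x) ≠ 0 := div_ne_zero hxne hene
  have hE : HasDerivAt e ((y / x / ((χ (y / x) - y / x) * (y / x + 1))) * e (y / x)) (y / x) := by
    rw [← hederiv]; exact hediff.hasDerivAt
  have hF : HasDerivAt f ((1 / (χ (y / x) - y / x)) * f (y / x)) (y / x) := by
    rw [← hfderiv]; exact hfdiff.hasDerivAt
  have hg1 : HasDerivAt (fun t => y / t) (-(y / x ^ 2)) x := by
    have := (hasDerivAt_inv hxne).const_mul y
    simpa [div_eq_mul_inv, mul_comm, mul_left_comm, mul_assoc] using this
  have hg2 : HasDerivAt (fun t => t / x) (1 / x) y := by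
    simpa using (hasDerivAt_id y).div_const x
  have hE1 : HasDerivAt (fun t => e (y / t))
      ((y / x / ((χ (y / x) - y / x) * (y / x + 1))) * e (y / x) * -(y / x ^ 2)) x :=
    hE.comp x hg1
  have hE2 : HasDerivAt (fun t => e (t / x))
      ((y / x / ((χ (y / x) - y / x) * (y / x + 1))) * e (y / x) * (1 / x)) y :=
    hE.comp y hg2
  have hF1 : HasDerivAt (fun t => f (y / t))
      ((1 / (χ (y / x) - y / x)) * f (y / x) * -(y / x ^ 2)) x :=
    hF.comp x hg1
  have hF2 : HasDerivAt (fun t => f (t / x))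
      ((1 / (χ (y / x) - y / x)) * f (y / x) * (1 / x)) y :=
    hF.comp y hg2
  -- n = ρ / e(π)
  have hN1 : HasDerivAt (fun t => t / e (y / t))
      ((1 * e (y / x) - x * ((y / x / ((χ (y / x) - y / x) * (y / x + 1))) * e (y / x) * -(y / x ^ 2))) / e (y / x) ^ 2) x :=
    (hasDerivAt_id x).div hE1 hene
  have hN2 : HasDerivAt (fun t => x / e (t / x))
      ((0 * e (y / x) - x * ((y / x / ((χ (y / x) - y / x) * (y / x + 1))) * e (y / x) * (1 / x))) / e (y / x) ^ 2) y :=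
    (hasDerivAt_const y x).div hE2 hene
  -- s = k log (f(π)/ρ)
  have hQ1 : HasDerivAt (fun t => f (y / t) / t)
      (((1 / (χ (y / x) - y / x)) * f (y / x) * -(y / x ^ 2) * x - f (y / x) * 1) / x ^ 2) x :=
    hF1.div (hasDerivAt_id x) hxne
  have hS1 : HasDerivAt (fun t => ktilde * Real.log (f (y / t) / t))
      (ktilde * ((((1 / (χ (y / x) - y / x)) * f (y / x) * -(y / x ^ 2) * x - f (y / x) * 1) / x ^ 2) / (f (y / x) / x))) x :=
    (hQ1.log (div_ne_zero hfne hxne)).const_mul ktilde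
  have hQ2 : HasDerivAt (fun t => f (t / x) / x)
      ((1 / (χ (y / x) - y / x)) * f (y / x) * (1 / x) / x) y :=
    hF2.div_const x
  have hS2 : HasDerivAt (fun t => ktilde * Real.log (f (t / x) / x))
      (ktilde * (((1 / (χ (y / x) - y / x)) * f (y / x) * (1 / x) / x) / (f (y / x) / x))) y :=
    (hQ2.log (div_ne_zero hfne hxne)).const_mul ktilde
  -- ε = e(π) − 1
  have hC1 : HasDerivAt (fun t => e (y / t) - 1)
      ((y / x / ((χ (y / x) - y / x) * (y / x + 1))) * e (y / x) * -(y / x ^ 2)) x :=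
    hE1.sub_const 1
  have hC2 : HasDerivAt (fun t => e (t / x) - 1)
      ((y / x / ((χ (y / x) - y / x) * (y / x + 1))) * e (y / x) * (1 / x)) y :=
    hE2.sub_const 1
  -- 1/n
  have hV1 : HasDerivAt (fun t => (t / e (y / t))⁻¹)
      (-((1 * e (y / x) - x * ((y / x / ((χ (y / x) - y / x) * (y / x + 1))) * e (y / x) * -(y / x ^ 2))) / e (y / x) ^ 2) / (x / e (y / x)) ^ 2) x :=
    hN1.inv hnne
  have hV2 : HasDerivAt (fun t => (x / e (t / x))⁻¹)
      (-((0 * e (y / x) - x * ((y / x / ((χ (y / x) - y / x) * (y / x + 1))) * e (y / x) * (1 / x))) / e (y / x) ^ 2) / (x / e (y / x)) ^ 2) y :=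
    hN2.inv hnne
  -- pd equalities
  have pn1 : pd1 (fun q => q.1 / e (q.2 / q.1)) x y
      = (1 * e (y / x) - x * ((y / x / ((χ (y / x) - y / x) * (y / x + 1))) * e (y / x) * -(y / x ^ 2))) / e (y / x) ^ 2 := hN1.deriv
  have pn2 : pd2 (fun q => q.1 / e (q.2 / q.1)) x y
      = (0 * e (y / x) - x * ((y / x / ((χ (y / x) - y / x) * (y / x + 1))) * e (y / x) * (1 / x))) / e (y / x) ^ 2 := hN2.deriv
  have ps1 : pd1 (fun q => ktilde * Real.log (f (q.2 / q.1) / q.1)) x y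
      = ktilde * ((((1 / (χ (y / x) - y / x)) * f (y / x) * -(y / x ^ 2) * x - f (y / x) * 1) / x ^ 2) / (f (y / x) / x)) := hS1.deriv
  have ps2 : pd2 (fun q => ktilde * Real.log (f (q.2 / q.1) / q.1)) x y
      = ktilde * (((1 / (χ (y / x) - y / x)) * f (y / x) * (1 / x) / x) / (f (y / x) / x)) := hS2.deriv
  have pc1 : pd1 (fun q => e (q.2 / q.1) - 1) x y
      = (y / x / ((χ (y / x) - y / x) * (y / x + 1))) * e (y / x) * -(y / x ^ 2) := hC1.deriv
  have pc2 : pd2 (fun q => e (q.2 / q.1) - 1) x y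
      = (y / x / ((χ (y / x) - y / x) * (y / x + 1))) * e (y / x) * (1 / x) := hC2.deriv
  have pv1 : pd1 (fun q => 1 / (q.1 / e (q.2 / q.1))) x y
      = -((1 * e (y / x) - x * ((y / x / ((χ (y / x) - y / x) * (y / x + 1))) * e (y / x) * -(y / x ^ 2))) / e (y / x) ^ 2) / (x / e (y / x)) ^ 2 := by
    have funeq : (fun q : ℝ × ℝ => 1 / (q.1 / e (q.2 / q.1))) = (fun q : ℝ × ℝ => (q.1 / e (q.2 / q.1))⁻¹) :=
      funext fun q => one_div _
    rw [funeq]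
    exact hV1.deriv
  have pv2 : pd2 (fun q => 1 / (q.1 / e (q.2 / q.1))) x y
      = -((0 * e (y / x) - x * ((y / x / ((χ (y / x) - y / x) * (y / x + 1))) * e (y / x) * (1 / x))) / e (y / x) ^ 2) / (x / e (y / x)) ^ 2 := by
    have funeq : (fun q : ℝ × ℝ => 1 / (q.1 / e (q.2 / q.1))) = (fun q : ℝ × ℝ => (q.1 / e (q.2 / q.1))⁻¹) :=
      funext fun q => one_div _
    rw [funeq]
    exact hV2.deriv
  refine ⟨?_, ?_, ?_, ?_, ?_, ?_⟩
  · field_simp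
  · field_simp; ring
  · rw [pn1, pn2]
    set p := y / x with hp
    have hy : y = p * x := by rw [hp]; field_simp
    have hxyp : x + p * x ≠ 0 := by rw [← hy]; exact hxy
    rw [hy]
    field_simp
    rw [eq_div_iff (by rwa [add_comm])]
    ring
  · rw [ps1, ps2]
    set p := y / x with hp
    have hy : y = p * x := by rw [hp]; field_simp
    have hxyp : x + p * x ≠ 0 := by rw [← hy]; exact hxy
    rw [hy]
    field_simp
    ring
  · rw [ps1, pc1, pv1]
    set p := y / x with hp
    have hy : y = p * x := by rw [hp]; field_simp
    have hxyp : x + p * x ≠ 0 := by rw [← hy]; exact hxy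
    rw [hy]
    field_simp
    ring
  · rw [ps2, pc2, pv2]
    set p := y / x with hp
    have hy : y = p * x := by rw [hp]; field_simp
    have hxyp : x + p * x ≠ 0 := by rw [← hy]; exact hxy
    rw [hy]
    field_simp
    ring
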